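/- For any two quantum states ρ and σ, B(ρ,σ)² ≤ ln 2 · D(ρ‖σ), where B is the Bures distance and D is the quantum relative entropy (in bits). -/

import Mathlib

open Matrix
open scoped ComplexOrder

/-- The square root of a positive semidefinite matrix (the Mathlib definition of
December 2024, since removed). -/
noncomputable def Matrix.PosSemidef.sqrt {n : Type*} [Fintype n] [DecidableEq n]
    {A : Matrix n n ℂ} (hA : A.PosSemidef) : Matrix n n ℂ :=
  hA.1.eigenvectorUnitary.1 * diagonal ((↑) ∘ (√·) ∘ hA.1.eigenvalues) *
    (star hA.1.eigenvectorUnitary : Matrix n n ℂ)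

/-- The trace norm `‖A‖₁ = Tr √(AᴴA)` of a complex matrix. -/
noncomputable def traceNorm {n : Type*} [Fintype n] [DecidableEq n]
    (A : Matrix n n ℂ) : ℝ :=
  ((Matrix.posSemidef_conjTranspose_mul_self A).sqrt).trace.re

open scoped Classical in
/-- The fidelity `F(ρ,σ) = ‖√ρ √σ‖₁` between two quantum states. -/
noncomputable def fidelity {n : Type*} [Fintype n] [DecidableEq n]
    (ρ σ : Matrix n n ℂ) : ℝ :=
  if h : ρ.PosSemidef ∧ σ.PosSemidef then traceNorm (h.1.sqrt * h.2.sqrt) else 0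

/-- The Bures distance `B(ρ,σ) = √(1 − F(ρ,σ))`. -/
noncomputable def bures {n : Type*} [Fintype n] [DecidableEq n]
    (ρ σ : Matrix n n ℂ) : ℝ :=
  Real.sqrt (1 - fidelity ρ σ)

open scoped Classical in
/-- The base-2 matrix logarithm of a Hermitian matrix, via its spectral
decomposition (junk value `0` on non-Hermitian matrices). -/
noncomputable def matLog2 {n : Type*} [Fintype n] [DecidableEq n]
    (A : Matrix n n ℂ) : Matrix n n ℂ :=
  if h : A.IsHermitian then h.cfc (fun x => Real.logb 2 x) else 0

open scoped Classical in
/-- The quantum relative entropy `D(ρ‖σ)` in bits, defined to be `+∞` when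
`supp ρ ⊄ supp σ` (i.e. when `ker σ ⊄ ker ρ`). -/
noncomputable def relEntE {n : Type*} [Fintype n] [DecidableEq n]
    (ρ σ : Matrix n n ℂ) : EReal :=
  if ∀ v : n → ℂ, σ.mulVec v = 0 → ρ.mulVec v = 0
  then ((((ρ * (matLog2 ρ - matLog2 σ)).trace).re : ℝ) : EReal)
  else ⊤

section helpers
variable {n : Type*} [Fintype n] [DecidableEq n]

lemma trace_conj_pair (U V : Matrix n n ℂ) (a b : n → ℝ) :
    ((U * diagonal (Complex.ofReal ∘ a) * star U) *
        (V * diagonal (Complex.ofReal ∘ b) * star V)).trace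
      = ((∑ i, ∑ j, a i * b j * ‖(star U * V) i j‖ ^ 2 : ℝ) : ℂ) := by
  set W := star U * V with hW
  have h1 : (U * diagonal (Complex.ofReal ∘ a) * star U) *
        (V * diagonal (Complex.ofReal ∘ b) * star V)
      = U * (diagonal (Complex.ofReal ∘ a) * (W *
          (diagonal (Complex.ofReal ∘ b) * (star V)))) := by
    simp only [hW, mul_assoc]
  rw [h1, trace_mul_comm]
  have h2 : (diagonal (Complex.ofReal ∘ a) * (W *
        (diagonal (Complex.ofReal ∘ b) * star V))) * U
      = diagonal (Complex.ofReal ∘ a) * (W * (diagonal (Complex.ofReal ∘ b) * star W)) := by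
    simp only [hW, Matrix.star_mul, star_star, mul_assoc]
  rw [h2, trace]
  have key : ∀ i, (diagonal (Complex.ofReal ∘ a) *
      (W * (diagonal (Complex.ofReal ∘ b) * star W))) i i
      = ∑ j, ((a i * b j * ‖W i j‖ ^ 2 : ℝ) : ℂ) := by
    intro i
    rw [diagonal_mul, mul_apply, Finset.mul_sum]
    refine Finset.sum_congr rfl fun j _ => ?_
    rw [diagonal_mul]
    have hsw : (star W) j i = star (W i j) := rfl
    rw [hsw]
    have hms : W i j * star (W i j) = ((‖W i j‖ ^ 2 : ℝ) : ℂ) := by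
      rw [Complex.star_def, Complex.mul_conj]
      norm_cast
      rw [Complex.normSq_eq_norm_sq]
    simp only [Function.comp_apply]
    push_cast
    push_cast at hms
    linear_combination (a i : ℂ) * (b j : ℂ) * hms
  simp only [diag_apply, key]
  push_cast
  rfl

lemma trace_conj_single (U : Matrix n n ℂ) (hU : star U * U = 1) (a : n → ℝ) :
    (U * diagonal (Complex.ofReal ∘ a) * star U).trace = ((∑ i, a i : ℝ) : ℂ) := by
  rw [mul_assoc, trace_mul_comm, mul_assoc, hU, mul_one, trace_diagonal]
  push_cast
  rfl

lemma sum_norm_sq_row (W : Matrix n n ℂ) (h : W * star W = 1) (i : n) :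
    ∑ j, ‖W i j‖ ^ 2 = (1 : ℝ) := by
  have h1 : (W * star W) i i = 1 := by rw [h, one_apply_eq]
  rw [mul_apply] at h1
  have h2 : ∀ j, W i j * (star W) j i = ((‖W i j‖ ^ 2 : ℝ) : ℂ) := by
    intro j
    have : (star W) j i = star (W i j) := rfl
    rw [this, Complex.star_def, Complex.mul_conj]
    norm_cast
    rw [Complex.normSq_eq_norm_sq]
  rw [Finset.sum_congr rfl (fun j _ => h2 j)] at h1
  norm_cast at h1

lemma entry_conj_diag (U V : Matrix n n ℂ) (a : n → ℝ) (j : n) :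
    (star V * (U * diagonal (Complex.ofReal ∘ a) * star U) * V) j j
      = ((∑ i, a i * ‖(star U * V) i j‖ ^ 2 : ℝ) : ℂ) := by
  set W := star U * V with hW
  have h1 : star V * (U * diagonal (Complex.ofReal ∘ a) * star U) * V
      = star W * (diagonal (Complex.ofReal ∘ a) * W) := by
    rw [hW, Matrix.star_mul, star_star]
    simp only [mul_assoc]
  rw [h1, mul_apply]
  have h2 : ∀ i, (star W) j i * (diagonal (Complex.ofReal ∘ a) * W) i j
      = ((a i * ‖W i j‖ ^ 2 : ℝ) : ℂ) := by
    intro i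
    rw [diagonal_mul]
    have hs : (star W) j i = star (W i j) := rfl
    have hms : W i j * star (W i j) = ((‖W i j‖ ^ 2 : ℝ) : ℂ) := by
      rw [Complex.star_def, Complex.mul_conj]
      norm_cast
      rw [Complex.normSq_eq_norm_sq]
    rw [hs]
    simp only [Function.comp_apply]
    push_cast
    push_cast at hms
    linear_combination (a i : ℂ) * hms
  rw [Finset.sum_congr rfl (fun i _ => h2 i)]
  push_cast
  rfl

lemma re_trace_le_traceNorm (M : Matrix n n ℂ) : M.trace.re ≤ traceNorm M := by
  have hMM := Matrix.posSemidef_conjTranspose_mul_self M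
  set d : n → ℝ := hMM.1.eigenvalues with hd
  set V : Matrix n n ℂ := (hMM.1.eigenvectorUnitary : Matrix n n ℂ) with hV
  have hVs : star V * V = 1 := Unitary.coe_star_mul_self _
  have hVs' : V * star V = 1 := Unitary.coe_mul_star_self _
  have htn : traceNorm M = ∑ i, Real.sqrt (d i) := by
    rw [traceNorm]
    have h1 : hMM.sqrt = V * diagonal (Complex.ofReal ∘ (Real.sqrt ∘ d)) * star V := rfl
    rw [h1, trace_conj_single V hVs, Complex.ofReal_re]
    rfl
  set M' := star V * M * V with hM'
  have htr : M'.trace = M.trace := by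
    rw [hM', Matrix.trace_mul_cycle, hVs', one_mul]
  have hdiag : star M' * M' = diagonal (Complex.ofReal ∘ d) := by
    have hsp : star V * (Mᴴ * M) * V = diagonal (Complex.ofReal ∘ d) := by
      have h := hMM.1.conjStarAlgAut_star_eigenvectorUnitary
      rw [Unitary.conjStarAlgAut_apply, Unitary.coe_star, star_star] at h
      exact h
    have h2 : star M' = star V * Mᴴ * V := by
      rw [hM']
      simp [Matrix.star_mul, star_star, star_eq_conjTranspose, Matrix.conjTranspose_mul, mul_assoc]
    calc star M' * M' = star V * Mᴴ * (V * star V) * M * V := by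
          rw [h2, hM']; simp only [mul_assoc]
      _ = star V * (Mᴴ * M) * V := by rw [hVs']; simp only [mul_one, mul_assoc]
      _ = diagonal (Complex.ofReal ∘ d) := hsp
  have hcol : ∀ i, ∑ k, ‖M' k i‖ ^ 2 = d i := by
    intro i
    have h3 : (star M' * M') i i = ((d i : ℝ) : ℂ) := by
      rw [hdiag, diagonal_apply_eq]; rfl
    rw [mul_apply] at h3
    have h4 : ∀ k, (star M') i k * M' k i = ((‖M' k i‖ ^ 2 : ℝ) : ℂ) := by
      intro k
      have : (star M') i k = star (M' k i) := rfl
      rw [this, Complex.star_def, mul_comm, Complex.mul_conj]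
      norm_cast
      rw [Complex.normSq_eq_norm_sq]
    rw [Finset.sum_congr rfl (fun k _ => h4 k)] at h3
    norm_cast at h3
  have hre : M.trace.re = ∑ i, (M' i i).re := by
    rw [← htr, trace]
    exact Complex.re_sum _ _
  rw [hre, htn]
  apply Finset.sum_le_sum
  intro i _
  have h5 : (M' i i).re ≤ ‖M' i i‖ := Complex.re_le_norm _
  have h6 : ‖M' i i‖ ^ 2 ≤ d i := by
    rw [← hcol i]
    exact Finset.single_le_sum (f := fun k => ‖M' k i‖ ^ 2) (fun k _ => sq_nonneg _)
      (Finset.mem_univ i)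
  have h7 : ‖M' i i‖ ≤ Real.sqrt (d i) := by
    rw [← Real.sqrt_sq (norm_nonneg (M' i i))]
    exact Real.sqrt_le_sqrt h6
  linarith

lemma term_ineq (p q c : ℝ) (hp : 0 ≤ p) (hq : 0 ≤ q) (hc : 0 ≤ c) (h0 : q = 0 → p * c = 0) :
    2 * (p * c - Real.sqrt p * Real.sqrt q * c) ≤ p * (Real.log p - Real.log q) * c := by
  rcases hp.eq_or_lt with rfl|hp'
  · simp
  rcases hq.eq_or_lt with rfl|hq'
  · have hc0 : c = 0 := by
      rcases mul_eq_zero.mp (h0 rfl) with h|h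
      · exact absurd h (ne_of_gt hp')
      · exact h
    simp [hc0]
  have hsp : 0 < Real.sqrt p := Real.sqrt_pos.mpr hp'
  have hsq : 0 < Real.sqrt q := Real.sqrt_pos.mpr hq'
  have hpp : Real.sqrt p * Real.sqrt p = p := Real.mul_self_sqrt hp
  have hqq : Real.sqrt q * Real.sqrt q = q := Real.mul_self_sqrt hq
  have key : 1 - Real.sqrt q / Real.sqrt p ≤ Real.log (Real.sqrt p) - Real.log (Real.sqrt q) := by
    have h := Real.one_sub_inv_le_log_of_pos (div_pos hsp hsq)
    rwa [Real.log_div (ne_of_gt hsp) (ne_of_gt hsq), inv_div] at h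
  have key2 : Real.sqrt p - Real.sqrt q
      ≤ Real.sqrt p * (Real.log (Real.sqrt p) - Real.log (Real.sqrt q)) := by
    have h := mul_le_mul_of_nonneg_left key hsp.le
    have he : Real.sqrt p * (1 - Real.sqrt q / Real.sqrt p) = Real.sqrt p - Real.sqrt q := by
      field_simp
    linarith [he ▸ h]
  have key3 : p - Real.sqrt p * Real.sqrt q
      ≤ p * (Real.log (Real.sqrt p) - Real.log (Real.sqrt q)) := by
    nlinarith [mul_le_mul_of_nonneg_left key2 hsp.le]
  have hlogp : Real.log p = 2 * Real.log (Real.sqrt p) := by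
    rw [Real.log_sqrt hp]; ring
  have hlogq : Real.log q = 2 * Real.log (Real.sqrt q) := by
    rw [Real.log_sqrt hq]; ring
  rw [hlogp, hlogq]
  nlinarith [mul_le_mul_of_nonneg_right key3 hc]

end helpers

/-- Pinsker's inequality, Bures form: for any two quantum states
`ρ`, `σ`, `B(ρ,σ)² ≤ ln 2 · D(ρ‖σ)`. -/
theorem bures_pinsker {n : Type*} [Fintype n] [DecidableEq n]
    (ρ σ : Matrix n n ℂ)
    (hρ : ρ.PosSemidef) (hρ1 : ρ.trace = 1)
    (hσ : σ.PosSemidef) (hσ1 : σ.trace = 1) :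
    ((bures ρ σ ^ 2 : ℝ) : EReal) ≤ ((Real.log 2 : ℝ) : EReal) * relEntE ρ σ := by
  by_cases hsupp : ∀ v : n → ℂ, σ.mulVec v = 0 → ρ.mulVec v = 0
  case neg =>
    rw [relEntE, if_neg hsupp, EReal.coe_mul_top_of_pos (Real.log_pos (by norm_num))]
    exact le_top
  rw [relEntE, if_pos hsupp, ← EReal.coe_mul, EReal.coe_le_coe_iff]
  -- setup
  have hρH : ρ.IsHermitian := hρ.1
  have hσH : σ.IsHermitian := hσ.1
  set U : Matrix n n ℂ := (hρH.eigenvectorUnitary : Matrix n n ℂ) with hU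
  set V : Matrix n n ℂ := (hσH.eigenvectorUnitary : Matrix n n ℂ) with hV
  set p : n → ℝ := hρH.eigenvalues with hp
  set q : n → ℝ := hσH.eigenvalues with hq
  set c : n → n → ℝ := fun i j => ‖(star U * V) i j‖ ^ 2 with hc
  have hUs : star U * U = 1 := Unitary.coe_star_mul_self _
  have hUs' : U * star U = 1 := Unitary.coe_mul_star_self _
  have hVs : star V * V = 1 := Unitary.coe_star_mul_self _
  have hVs' : V * star V = 1 := Unitary.coe_mul_star_self _
  have hpnn : ∀ i, 0 ≤ p i := hρ.eigenvalues_nonneg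
  have hqnn : ∀ j, 0 ≤ q j := hσ.eigenvalues_nonneg
  have hcnn : ∀ i j, 0 ≤ c i j := fun i j => sq_nonneg _
  have hρspec : ρ = U * diagonal (Complex.ofReal ∘ p) * star U := hρH.spectral_theorem
  have hσspec : σ = V * diagonal (Complex.ofReal ∘ q) * star V := hσH.spectral_theorem
  -- row and column sums of c
  have hWW : (star U * V) * star (star U * V) = 1 := by
    rw [Matrix.star_mul, star_star]
    calc star U * V * (star V * U) = star U * (V * star V) * U := by simp only [mul_assoc]
      _ = 1 := by rw [hVs', mul_one, hUs]
  have hWW' : (star (star U * V)) * star (star (star U * V)) = 1 := by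
    rw [star_star, Matrix.star_mul, star_star]
    calc star V * U * (star U * V) = star V * (U * star U) * V := by simp only [mul_assoc]
      _ = 1 := by rw [hUs', mul_one, hVs]
  have hrowc : ∀ i, ∑ j, c i j = 1 := fun i => sum_norm_sq_row _ hWW i
  have hcolc : ∀ j, ∑ i, c i j = 1 := by
    intro j
    have h := sum_norm_sq_row _ hWW' j
    calc ∑ i, c i j = ∑ i, ‖(star (star U * V)) j i‖ ^ 2 := by
          refine Finset.sum_congr rfl fun i _ => ?_
          have : (star (star U * V)) j i = star ((star U * V) i j) := rfl
          rw [this, norm_star]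
      _ = 1 := h
  -- eigenvalue sums
  have hp1 : ∑ i, p i = 1 := by
    have h := trace_conj_single U hUs p
    rw [← hρspec] at h
    rw [hρ1] at h
    exact_mod_cast h.symm
  have hq1 : ∑ j, q j = 1 := by
    have h := trace_conj_single V hVs q
    rw [← hσspec] at h
    rw [hσ1] at h
    exact_mod_cast h.symm
  -- support condition
  have hzero : ∀ j, q j = 0 → ∀ i, p i * c i j = 0 := by
    intro j hqj i
    have hv : σ.mulVec ⇑(hσH.eigenvectorBasis j) = 0 := by
      rw [hσH.mulVec_eigenvectorBasis]
      rw [show hσH.eigenvalues j = q j from rfl, hqj]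
      simp
    have hρv : ρ.mulVec ⇑(hσH.eigenvectorBasis j) = 0 := hsupp _ hv
    have hcolj : ∀ k, (ρ * V) k j = 0 := by
      intro k
      have h1 : (ρ * V) k j = ρ.mulVec ⇑(hσH.eigenvectorBasis j) k := by
        rw [mul_apply, mulVec]
        rfl
      rw [h1, hρv]
      rfl
    have hzz : (star V * (ρ * V)) j j = 0 := by
      rw [mul_apply]
      exact Finset.sum_eq_zero fun k _ => by rw [hcolj k, mul_zero]
    have hform := entry_conj_diag U V p j
    rw [← hρspec] at hform
    rw [← mul_assoc] at hzz
    rw [hzz] at hform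
    have hsumz : ∑ i, p i * c i j = 0 := by exact_mod_cast hform.symm
    have := (Finset.sum_eq_zero_iff_of_nonneg
      (fun i _ => mul_nonneg (hpnn i) (hcnn i j))).mp hsumz
    exact this i (Finset.mem_univ i)
  -- square-root traces
  have hsqρ : hρ.sqrt = U * diagonal (Complex.ofReal ∘ (Real.sqrt ∘ p)) * star U := rfl
  have hsqσ : hσ.sqrt = V * diagonal (Complex.ofReal ∘ (Real.sqrt ∘ q)) * star V := rfl
  set T : ℝ := ∑ i, ∑ j, Real.sqrt (p i) * Real.sqrt (q j) * c i j with hTdef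
  have hT : (hρ.sqrt * hσ.sqrt).trace = ((T : ℝ) : ℂ) := by
    rw [hsqρ, hsqσ]
    exact trace_conj_pair U V (Real.sqrt ∘ p) (Real.sqrt ∘ q)
  have hTF : T ≤ fidelity ρ σ := by
    have h1 : fidelity ρ σ = traceNorm (hρ.sqrt * hσ.sqrt) := by
      rw [fidelity, dif_pos (⟨hρ, hσ⟩ : ρ.PosSemidef ∧ σ.PosSemidef)]
    have h2 := re_trace_le_traceNorm (hρ.sqrt * hσ.sqrt)
    rw [hT, Complex.ofReal_re] at h2
    rw [h1]
    exact h2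
  -- logs
  have hL2ρ : matLog2 ρ = U * diagonal (Complex.ofReal ∘ ((fun x => Real.logb 2 x) ∘ p))
      * star U := by
    rw [matLog2, dif_pos hρH]
    rfl
  have hL2σ : matLog2 σ = V * diagonal (Complex.ofReal ∘ ((fun x => Real.logb 2 x) ∘ q))
      * star V := by
    rw [matLog2, dif_pos hσH]
    rfl
  have hone : ∀ i j : n, ‖(1 : Matrix n n ℂ) i j‖ ^ 2 = if i = j then (1:ℝ) else 0 := by
    intro i j
    by_cases h : i = j
    · subst h; rw [one_apply_eq]; simp
    · rw [one_apply_ne h]; simp [h]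
  have hcollapse : ∑ i, ∑ j, p i * ((fun x => Real.logb 2 x) ∘ p) j
        * ‖(1 : Matrix n n ℂ) i j‖ ^ 2 = ∑ i, p i * Real.logb 2 (p i) := by
    refine Finset.sum_congr rfl fun i _ => ?_
    simp only [hone, mul_ite, mul_one, mul_zero, Function.comp_apply]
    rw [Finset.sum_ite_eq Finset.univ i fun j => p i * Real.logb 2 (p j)]
    simp
  have htrρρ : (ρ * matLog2 ρ).trace = ((∑ i, p i * Real.logb 2 (p i) : ℝ) : ℂ) := by
    rw [hL2ρ]
    conv_lhs => rw [hρspec]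
    rw [trace_conj_pair U U p ((fun x => Real.logb 2 x) ∘ p), hUs, hcollapse]
  have htrρσ : (ρ * matLog2 σ).trace
      = ((∑ i, ∑ j, p i * Real.logb 2 (q j) * c i j : ℝ) : ℂ) := by
    rw [hL2σ]
    conv_lhs => rw [hρspec]
    exact trace_conj_pair U V p ((fun x => Real.logb 2 x) ∘ q)
  have h2ne : Real.log 2 ≠ 0 := ne_of_gt (Real.log_pos (by norm_num))
  have hlb : ∀ x : ℝ, Real.log 2 * Real.logb 2 x = Real.log x := by
    intro x
    rw [Real.logb, mul_comm, div_mul_cancel₀ _ h2ne]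
  have hRHS : Real.log 2 * ((ρ * (matLog2 ρ - matLog2 σ)).trace).re
      = ∑ i, ∑ j, p i * (Real.log (p i) - Real.log (q j)) * c i j := by
    rw [mul_sub, trace_sub, Complex.sub_re, htrρρ, htrρσ, Complex.ofReal_re,
      Complex.ofReal_re, mul_sub]
    have e1 : Real.log 2 * (∑ i, p i * Real.logb 2 (p i))
        = ∑ i, ∑ j, (p i * Real.log (p i)) * c i j := by
      rw [Finset.mul_sum]
      refine Finset.sum_congr rfl fun i _ => ?_
      rw [← Finset.mul_sum, hrowc i, mul_one, ← mul_assoc, mul_comm (Real.log 2) (p i),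
        mul_assoc, hlb]
    have e2 : Real.log 2 * (∑ i, ∑ j, p i * Real.logb 2 (q j) * c i j)
        = ∑ i, ∑ j, (p i * Real.log (q j)) * c i j := by
      rw [Finset.mul_sum]
      refine Finset.sum_congr rfl fun i _ => ?_
      rw [Finset.mul_sum]
      refine Finset.sum_congr rfl fun j _ => ?_
      rw [← hlb (q j)]
      ring
    rw [e1, e2, ← Finset.sum_sub_distrib]
    refine Finset.sum_congr rfl fun i _ => ?_
    rw [← Finset.sum_sub_distrib]
    refine Finset.sum_congr rfl fun j _ => ?_
    ring
  -- sums of p c and q c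
  have hsum_pc : ∑ i, ∑ j, p i * c i j = 1 := by
    calc ∑ i, ∑ j, p i * c i j = ∑ i, p i := by
          refine Finset.sum_congr rfl fun i _ => ?_
          rw [← Finset.mul_sum, hrowc i, mul_one]
      _ = 1 := hp1
  have hsum_qc : ∑ i, ∑ j, q j * c i j = 1 := by
    rw [Finset.sum_comm]
    calc ∑ j, ∑ i, q j * c i j = ∑ j, q j := by
          refine Finset.sum_congr rfl fun j _ => ?_
          rw [← Finset.mul_sum, hcolc j, mul_one]
      _ = 1 := hq1
  -- Pinsker-type sum inequality
  have hPinsker : 2 * (1 - T) ≤ ∑ i, ∑ j, p i * (Real.log (p i) - Real.log (q j)) * c i j := by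
    have h := Finset.sum_le_sum (fun i (_ : i ∈ Finset.univ) =>
      Finset.sum_le_sum (fun j (_ : j ∈ Finset.univ) =>
        term_ineq (p i) (q j) (c i j) (hpnn i) (hqnn j) (hcnn i j)
          (fun hq0 => hzero j hq0 i)))
    have hL : ∑ i, ∑ j, 2 * (p i * c i j - Real.sqrt (p i) * Real.sqrt (q j) * c i j)
        = 2 * (1 - T) := by
      rw [← hsum_pc, hTdef]
      simp only [mul_sub, Finset.mul_sum, Finset.sum_sub_distrib]
    rw [← hL]
    exact h
  have hT1 : T ≤ 1 := by
    have hle : ∀ i j, Real.sqrt (p i) * Real.sqrt (q j) * c i j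
        ≤ (p i * c i j + q j * c i j) / 2 := by
      intro i j
      have hh : Real.sqrt (p i) * Real.sqrt (q j) ≤ (p i + q j) / 2 := by
        nlinarith [sq_nonneg (Real.sqrt (p i) - Real.sqrt (q j)),
          Real.mul_self_sqrt (hpnn i), Real.mul_self_sqrt (hqnn j)]
      have := mul_le_mul_of_nonneg_right hh (hcnn i j)
      calc Real.sqrt (p i) * Real.sqrt (q j) * c i j ≤ (p i + q j) / 2 * c i j := this
        _ = (p i * c i j + q j * c i j) / 2 := by ring
    calc T ≤ ∑ i, ∑ j, (p i * c i j + q j * c i j) / 2 :=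
          Finset.sum_le_sum fun i _ => Finset.sum_le_sum fun j _ => hle i j
      _ = 1 := by
          simp only [← Finset.sum_div, Finset.sum_add_distrib]
          rw [hsum_pc, hsum_qc]
          norm_num
  -- conclusion
  rcases le_or_gt (fidelity ρ σ) 1 with hF | hF
  · have h0 : 0 ≤ 1 - fidelity ρ σ := by linarith
    rw [bures, Real.sq_sqrt h0, hRHS]
    linarith
  · rw [bures, Real.sqrt_eq_zero_of_nonpos (by linarith), hRHS]
    norm_num
    linarith
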